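/- The composition s₀ ∘ s₂ has order three: (s₀ s₂)³ = id, i.e., at every point where all denominators occurring in the sixfold composition are nonzero, applying s₀, s₂ alternately three times each returns the original point. -/

import Mathlib

open Finset

noncomputable section

/-- A point `(ε, q, p, x) ∈ ℂ^{n+3} × ℂⁿ × ℂⁿ × ℂⁿ`, where `n = m + 2` (so `n ≥ 2`).
Indices are 0-based: `e ⟨j-1,_⟩` is the paper's `ε_j`, etc. -/
structure GPt (m : ℕ) where
  e : Fin (m + 5) → ℂ
  q : Fin (m + 2) → ℂ
  p : Fin (m + 2) → ℂ
  x : Fin (m + 2) → ℂ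

namespace GPt

variable {m : ℕ}

/-- `Q₁ = Σ_{l=1}^n q_l p_l + (1 − Σ_{l=1}^{n+3} ε_l)/2`. -/
def Q1 (P : GPt m) : ℂ := (∑ l, P.q l * P.p l) + (1 - ∑ j, P.e j) / 2

/-- `Q₂ = Σ_{j=1}^n q_j − 1`. -/
def Q2 (P : GPt m) : ℂ := (∑ j, P.q j) - 1

/-- The index of `ε_{j+3}` (paper numbering) for `j` indexing `q, p, x`. -/
def eIdx (j : Fin (m + 2)) : Fin (m + 5) := ⟨j.val + 3, by omega⟩

/-- The transformation `s₀`. -/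
def s0 (P : GPt m) : GPt m where
  e := fun j => if j = 0 then 1 - P.e 1 else if j = 1 then 1 - P.e 0 else P.e j
  q := fun j => P.p j * (P.q j * P.p j - P.e (eIdx j)) / (P.Q1 * (P.Q1 + P.e 2))
  p := fun j => -(P.Q1 * (P.Q1 + P.e 2)) / P.p j
  x := fun i => 1 / P.x i

/-- The transformation `s₁`. -/
def s1 (P : GPt m) : GPt m where
  e := fun j => P.e (Equiv.swap 0 1 j)
  q := fun j => P.q j / P.x j
  p := fun j => P.x j * P.p j
  x := fun i => 1 / P.x i

/-- The transformation `s₂`. -/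
def s2 (P : GPt m) : GPt m where
  e := fun j => P.e (Equiv.swap 1 2 j)
  q := fun j => P.q j / P.Q2
  p := fun j => (P.p j - P.Q1) * P.Q2
  x := fun i => P.x i / (P.x i - 1)

/-- The transformation `s₃`. -/
def s3 (P : GPt m) : GPt m where
  e := fun j => P.e (Equiv.swap 2 3 j)
  q := fun j => if j = 0 then 1 / P.q 0 else -P.q j / P.q 0
  p := fun j => if j = 0 then -(P.q 0 * P.Q1) else -(P.q 0 * P.p j)
  x := fun i => if i = 0 then 1 / P.x 0 else P.x i / P.x 0

/-- The transformation `s_k` for `4 ≤ k ≤ n+2`: `ε_k ↔ ε_{k+1}` together with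
`(q_{k-3}, p_{k-3}, x_{k-3}) ↔ (q_{k-2}, p_{k-2}, x_{k-2})` (paper numbering). -/
def sMid (k : ℕ) (h : 4 ≤ k ∧ k ≤ m + 4) (P : GPt m) : GPt m where
  e := fun j => P.e (Equiv.swap ⟨k - 1, by omega⟩ ⟨k, by omega⟩ j)
  q := fun j => P.q (Equiv.swap ⟨k - 4, by omega⟩ ⟨k - 3, by omega⟩ j)
  p := fun j => P.p (Equiv.swap ⟨k - 4, by omega⟩ ⟨k - 3, by omega⟩ j)
  x := fun j => P.x (Equiv.swap ⟨k - 4, by omega⟩ ⟨k - 3, by omega⟩ j)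

/-- The transformation `s_{n+3}`: `ε_{n+3} ↦ −ε_{n+3}`, `p_n ↦ p_n − ε_{n+3}/q_n`. -/
def sLast (P : GPt m) : GPt m where
  e := Function.update P.e ⟨m + 4, by omega⟩ (-(P.e ⟨m + 4, by omega⟩))
  q := P.q
  p := Function.update P.p (Fin.last (m + 1))
    (P.p (Fin.last (m + 1)) - P.e ⟨m + 4, by omega⟩ / P.q (Fin.last (m + 1)))
  x := P.x

/-- The family `s_k`, `k = 0, 1, …, n+3` (junk value `id` for `k > n+3`). -/
def s (k : ℕ) (P : GPt m) : GPt m :=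
  if k = 0 then P.s0
  else if k = 1 then P.s1
  else if k = 2 then P.s2
  else if k = 3 then P.s3
  else if h : 4 ≤ k ∧ k ≤ m + 4 then sMid k h P
  else if k = m + 5 then P.sLast
  else P

/-- The nonvanishing, at a given point, of all denominators occurring in `s_k`. -/
def Dfd (k : ℕ) (P : GPt m) : Prop :=
  if k = 0 then
    (∀ j, P.p j ≠ 0) ∧ P.Q1 ≠ 0 ∧ P.Q1 + P.e 2 ≠ 0 ∧ (∀ i, P.x i ≠ 0)
  else if k = 1 then ∀ i, P.x i ≠ 0
  else if k = 2 then P.Q2 ≠ 0 ∧ ∀ i, P.x i ≠ 1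
  else if k = 3 then P.q 0 ≠ 0 ∧ P.x 0 ≠ 0
  else if k = m + 5 then P.q (Fin.last (m + 1)) ≠ 0
  else True

/-- Apply `s_{k₁}, s_{k₂}, …` in succession. -/
def chain : List ℕ → GPt m → GPt m
  | [], P => P
  | k :: ks, P => chain ks (s k P)

/-- All denominators occurring in the successive application of
`s_{k₁}, s_{k₂}, …` are nonzero. -/
def chainDfd : List ℕ → GPt m → Prop
  | [], _ => True
  | k :: ks, P => Dfd k P ∧ chainDfd ks (s k P)

end GPt

open GPt

namespace GPt

variable {m : ℕ}

/-- Nonvanishing of all denominators occurring in `s₀`. -/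
def Dfd0 (P : GPt m) : Prop :=
  (∀ j, P.p j ≠ 0) ∧ P.Q1 ≠ 0 ∧ P.Q1 + P.e 2 ≠ 0 ∧ (∀ i, P.x i ≠ 0)

/-- Nonvanishing of all denominators occurring in `s₁`. -/
def Dfd1 (P : GPt m) : Prop := ∀ i, P.x i ≠ 0

/-- Nonvanishing of all denominators occurring in `s₂`. -/
def Dfd2 (P : GPt m) : Prop := P.Q2 ≠ 0 ∧ ∀ i, P.x i ≠ 1

/-- Nonvanishing of all denominators occurring in `s₃`. -/
def Dfd3 (P : GPt m) : Prop := P.q 0 ≠ 0 ∧ P.x 0 ≠ 0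

/-- Nonvanishing of all denominators occurring in `s_{n+3}`. -/
def DfdLast (P : GPt m) : Prop := P.q (Fin.last (m + 1)) ≠ 0

end GPt

namespace GPt

section Aux
variable {m : ℕ}

lemma sum_e_split (e : Fin (m + 5) → ℂ) :
    ∑ j, e j = e 0 + e 1 + e 2 + ∑ j : Fin (m + 2), e (eIdx j) := by
  rw [Fin.sum_univ_succ (f := e), Fin.sum_univ_succ, Fin.sum_univ_succ]
  have h : ∀ j : Fin (m + 2), e (eIdx j) = e j.succ.succ.succ := fun j => rfl
  simp only [h, Fin.succ_zero_eq_one, Fin.succ_one_eq_two]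
  ring

end Aux
section Aux2
variable {m : ℕ} (P : GPt m)

lemma fin_ne_10 : (1 : Fin (m + 5)) ≠ 0 := by
  intro h; have := congrArg Fin.val h; simp at this
lemma fin_ne_20 : (2 : Fin (m + 5)) ≠ 0 := by
  intro h; have := congrArg Fin.val h; simp at this; rw [Nat.mod_eq_of_lt (by omega : 2 < m + 5)] at this; omega
lemma fin_ne_21 : (2 : Fin (m + 5)) ≠ 1 := by
  intro h; have := congrArg Fin.val h; simp at this; rw [Nat.mod_eq_of_lt (by omega : 2 < m + 5)] at this; omega
lemma eIdx_ne_0 (j : Fin (m + 2)) : eIdx j ≠ 0 := by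
  intro h; have := congrArg Fin.val h; simp [eIdx] at this
lemma eIdx_ne_1 (j : Fin (m + 2)) : eIdx j ≠ 1 := by
  intro h; have := congrArg Fin.val h; simp [eIdx] at this
lemma eIdx_ne_2 (j : Fin (m + 2)) : eIdx j ≠ 2 := by
  intro h; have := congrArg Fin.val h; simp [eIdx] at this; rw [Nat.mod_eq_of_lt (by omega : 2 < m + 5)] at this; omega

lemma e_s0_0 : P.s0.e 0 = 1 - P.e 1 := by simp [s0]
lemma e_s0_1 : P.s0.e 1 = 1 - P.e 0 := by simp [s0, fin_ne_10]
lemma e_s0_2 : P.s0.e 2 = P.e 2 := by simp [s0, fin_ne_20, fin_ne_21]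
lemma e_s0_idx (j : Fin (m + 2)) : P.s0.e (eIdx j) = P.e (eIdx j) := by
  simp [s0, eIdx_ne_0, eIdx_ne_1]
lemma e_s2_0 : P.s2.e 0 = P.e 0 := by
  simp [s2, Equiv.swap_apply_of_ne_of_ne (fin_ne_10 (m := m)).symm (fin_ne_20 (m := m)).symm]
lemma e_s2_1 : P.s2.e 1 = P.e 2 := by simp [s2]
lemma e_s2_2 : P.s2.e 2 = P.e 1 := by simp [s2]
lemma e_s2_idx (j : Fin (m + 2)) : P.s2.e (eIdx j) = P.e (eIdx j) := by
  simp [s2, Equiv.swap_apply_of_ne_of_ne (eIdx_ne_1 j) (eIdx_ne_2 j)]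

lemma sum_e_s0 : ∑ j, P.s0.e j = (∑ j, P.e j) + 2 - 2 * P.e 0 - 2 * P.e 1 := by
  rw [sum_e_split (P.s0.e), sum_e_split P.e, e_s0_0, e_s0_1, e_s0_2]
  rw [Finset.sum_congr rfl fun j _ => e_s0_idx P j]
  ring
lemma sum_e_s2 : ∑ j, P.s2.e j = ∑ j, P.e j := by
  simp only [s2]; exact Equiv.sum_comp _ P.e

end Aux2
section Aux3
variable {m : ℕ} (P : GPt m)

lemma Q1_s0 (hp : ∀ j, P.p j ≠ 0) (ha : P.Q1 ≠ 0) (hb : P.Q1 + P.e 2 ≠ 0) :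
    P.s0.Q1 = -(P.Q1 + P.e 2) := by
  have hab : P.Q1 * (P.Q1 + P.e 2) ≠ 0 := mul_ne_zero ha hb
  have key : ∀ j, P.s0.q j * P.s0.p j = P.e (eIdx j) - P.q j * P.p j := by
    intro j
    show P.p j * (P.q j * P.p j - P.e (eIdx j)) / (P.Q1 * (P.Q1 + P.e 2)) *
      (-(P.Q1 * (P.Q1 + P.e 2)) / P.p j) = _
    rw [div_mul_div_comm,
      show P.p j * (P.q j * P.p j - P.e (eIdx j)) * -(P.Q1 * (P.Q1 + P.e 2))
        = (P.e (eIdx j) - P.q j * P.p j) * (P.Q1 * (P.Q1 + P.e 2) * P.p j) by ring,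
      mul_div_assoc, div_self (mul_ne_zero hab (hp j)), mul_one]
  have hQ : P.Q1 = (∑ j, P.q j * P.p j) + (1 - ∑ j, P.e j) / 2 := rfl
  show (∑ j, P.s0.q j * P.s0.p j) + (1 - ∑ j, P.s0.e j) / 2 = _
  rw [Finset.sum_congr rfl fun j _ => key j, Finset.sum_sub_distrib, sum_e_s0, hQ,
    sum_e_split P.e]
  ring

lemma Q1_s2 (hc : P.Q2 ≠ 0) : P.s2.Q1 = -(P.Q1 * P.Q2) := by
  have key : ∀ j, P.s2.q j * P.s2.p j = P.q j * P.p j - P.q j * P.Q1 := by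
    intro j
    show P.q j / P.Q2 * ((P.p j - P.Q1) * P.Q2) = _
    field_simp
  have hQ : P.Q1 = (∑ j, P.q j * P.p j) + (1 - ∑ j, P.e j) / 2 := rfl
  have hQ2 : P.Q2 = (∑ j, P.q j) - 1 := rfl
  have h2 : (∑ j, P.q j) = P.Q2 + 1 := by rw [hQ2]; ring
  show (∑ j, P.s2.q j * P.s2.p j) + (1 - ∑ j, P.s2.e j) / 2 = _
  rw [Finset.sum_congr rfl fun j _ => key j, Finset.sum_sub_distrib, sum_e_s2,
    ← Finset.sum_mul, h2, hQ]
  ring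

lemma Q2_s2 (hc : P.Q2 ≠ 0) : P.s2.Q2 = 1 / P.Q2 := by
  have hQ2 : P.Q2 = (∑ j, P.q j) - 1 := rfl
  show (∑ j, P.s2.q j) - 1 = _
  simp only [s2]
  rw [← Finset.sum_div]
  field_simp
  linear_combination -hQ2

end Aux3
section Aux4
variable {m : ℕ} (P : GPt m)

lemma sum_q : ∑ j, P.q j = P.Q2 + 1 := by
  have h : P.Q2 = (∑ j, P.q j) - 1 := rfl
  rw [h]; ring

lemma sum_qp : ∑ j, P.q j * P.p j = P.Q1 - (1 - ∑ j, P.e j) / 2 := by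
  have h : P.Q1 = (∑ j, P.q j * P.p j) + (1 - ∑ j, P.e j) / 2 := rfl
  rw [h]; ring

lemma sum_e_idx : ∑ j : Fin (m + 2), P.e (eIdx j)
    = (∑ j, P.e j) - P.e 0 - P.e 1 - P.e 2 := by
  rw [sum_e_split P.e]; ring

set_option maxHeartbeats 2000000 in
lemma Q2_s0s2s0 (hp : ∀ j, P.p j ≠ 0) (ha : P.Q1 ≠ 0) (hb : P.Q1 + P.e 2 ≠ 0)
    (hd : P.s0.Q2 ≠ 0) (ha2 : P.s0.s2.Q1 ≠ 0)
    (hb2 : P.s0.s2.Q1 + P.s0.s2.e 2 ≠ 0) :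
    P.s0.s2.s0.Q2 = (P.Q1 * P.Q2 - P.e 1)
      / ((P.Q1 + P.e 2) * P.s0.Q2 + 1 - P.e 0) := by
  have hA1 := Q1_s0 P hp ha hb
  have hA2 : P.s0.s2.Q1 = (P.Q1 + P.e 2) * P.s0.Q2 := by
    rw [Q1_s2 _ hd, hA1]; ring
  have he2X : P.s0.s2.e 2 = 1 - P.e 0 := by rw [e_s2_2, e_s0_1]
  have hB2 : P.s0.s2.Q1 + P.s0.s2.e 2
      = (P.Q1 + P.e 2) * P.s0.Q2 + 1 - P.e 0 := by rw [hA2, he2X]; ring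
  have hB2ne : (P.Q1 + P.e 2) * P.s0.Q2 + 1 - P.e 0 ≠ 0 := hB2 ▸ hb2
  have key' : ∀ j, P.s0.s2.p j * (P.s0.s2.q j * P.s0.s2.p j - P.e (eIdx j))
      = P.s0.s2.Q1 * ((P.Q1 + P.e 2) * P.s0.q j - 2 * (P.q j * P.p j)
        + P.e (eIdx j) + P.Q1 * P.q j) := by
    intro j
    have hpj := hp j
    show (P.s0.p j - P.s0.Q1) * P.s0.Q2 *
      (P.s0.q j / P.s0.Q2 * ((P.s0.p j - P.s0.Q1) * P.s0.Q2) - P.e (eIdx j)) = _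
    have hp1 : P.s0.p j = -(P.Q1 * (P.Q1 + P.e 2)) / P.p j := rfl
    have hq1 : P.s0.q j = P.p j * (P.q j * P.p j - P.e (eIdx j))
        / (P.Q1 * (P.Q1 + P.e 2)) := rfl
    have hstep : P.s0.q j / P.s0.Q2 * ((P.s0.p j - P.s0.Q1) * P.s0.Q2)
        = P.s0.q j * (P.s0.p j - P.s0.Q1) := by
      field_simp
    have h1 : P.s0.p j - P.s0.Q1
        = (P.Q1 + P.e 2) * (P.p j - P.Q1) / P.p j := by
      rw [hA1, hp1]; field_simp; ring
    have h2 : P.s0.q j * (P.s0.p j - P.s0.Q1)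
        = (P.q j * P.p j - P.e (eIdx j)) * (P.p j - P.Q1) / P.Q1 := by
      rw [hq1, h1, div_mul_div_comm]
      rw [eq_div_iff ha, div_mul_eq_mul_div, div_eq_iff (by
        exact mul_ne_zero (mul_ne_zero ha hb) hpj)]
      ring
    have h3 : (P.Q1 + P.e 2) * P.s0.q j
        = P.p j * (P.q j * P.p j - P.e (eIdx j)) / P.Q1 := by
      rw [hq1, mul_div_assoc']
      rw [div_eq_div_iff (mul_ne_zero ha hb) ha]
      ring
    rw [hstep, hA2, h2, h1, h3]
    field_simp
    ring
  have key : ∀ j, P.s0.s2.s0.q j =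
      ((P.Q1 + P.e 2) * P.s0.q j - 2 * (P.q j * P.p j) + P.e (eIdx j)
        + P.Q1 * P.q j) / ((P.Q1 + P.e 2) * P.s0.Q2 + 1 - P.e 0) := by
    intro j
    show P.s0.s2.p j * (P.s0.s2.q j * P.s0.s2.p j - P.s0.s2.e (eIdx j)) /
      (P.s0.s2.Q1 * (P.s0.s2.Q1 + P.s0.s2.e 2)) = _
    rw [e_s2_idx, e_s0_idx, key' j, mul_div_mul_left _ _ ha2, hB2]
  show (∑ j, P.s0.s2.s0.q j) - 1 = _
  rw [Finset.sum_congr rfl fun j _ => key j, ← Finset.sum_div,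
    eq_div_iff hB2ne, sub_mul, div_mul_cancel₀ _ hB2ne, one_mul]
  rw [show ∀ S : Finset (Fin (m+2)), ∀ f g h k : Fin (m+2) → ℂ,
    (∑ j ∈ S, (f j - g j + h j + k j))
      = (∑ j ∈ S, f j) - (∑ j ∈ S, g j) + (∑ j ∈ S, h j) + (∑ j ∈ S, k j)
    from fun S f g h k => by
      rw [Finset.sum_add_distrib, Finset.sum_add_distrib, Finset.sum_sub_distrib]]
  rw [← Finset.mul_sum, ← Finset.mul_sum, ← Finset.mul_sum, sum_q, sum_q, sum_qp,
    sum_e_idx]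
  ring
end Aux4

section Aux4b
variable {m : ℕ} (P : GPt m)

lemma s0_p_sub (hp : ∀ j, P.p j ≠ 0) (ha : P.Q1 ≠ 0) (hb : P.Q1 + P.e 2 ≠ 0)
    (j : Fin (m + 2)) :
    P.s0.p j - P.s0.Q1 = (P.Q1 + P.e 2) * (P.p j - P.Q1) / P.p j := by
  rw [Q1_s0 P hp ha hb]
  show -(P.Q1 * (P.Q1 + P.e 2)) / P.p j - -(P.Q1 + P.e 2) = _
  rw [eq_div_iff (hp j), sub_mul, div_mul_cancel₀ _ (hp j)]
  ring

lemma s0_qp_sub (hp : ∀ j, P.p j ≠ 0) (ha : P.Q1 ≠ 0) (hb : P.Q1 + P.e 2 ≠ 0)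
    (j : Fin (m + 2)) :
    P.s0.q j * (P.s0.p j - P.s0.Q1)
      = (P.q j * P.p j - P.e (eIdx j)) * (P.p j - P.Q1) / P.Q1 := by
  have hpj := hp j
  have hq1 : P.s0.q j = P.p j * (P.q j * P.p j - P.e (eIdx j))
      / (P.Q1 * (P.Q1 + P.e 2)) := rfl
  rw [hq1, s0_p_sub P hp ha hb j, div_mul_div_comm]
  rw [eq_div_iff ha, div_mul_eq_mul_div, div_eq_iff (by
    exact mul_ne_zero (mul_ne_zero ha hb) hpj)]
  ring

end Aux4b

lemma e_s0_other {m : ℕ} (P : GPt m) {j : Fin (m + 5)} (h1 : j ≠ 0) (h2 : j ≠ 1) :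
    P.s0.e j = P.e j := by simp [s0, h1, h2]

lemma e_s2_other {m : ℕ} (P : GPt m) {j : Fin (m + 5)} (h1 : j ≠ 1) (h2 : j ≠ 2) :
    P.s2.e j = P.e j := by simp [s2, Equiv.swap_apply_of_ne_of_ne h1 h2]

lemma ext' {m : ℕ} {X Y : GPt m} (he : X.e = Y.e) (hq : X.q = Y.q)
    (hp : X.p = Y.p) (hx : X.x = Y.x) : X = Y := by
  cases X; cases Y; simp_all

end GPt

set_option maxHeartbeats 4000000

/-- `(s₀ s₂)³ = id`: at every point where all denominators occurring in the
sixfold composition are nonzero, applying `s₀, s₂` alternately three times each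
returns the original point. -/
theorem s0_s2_order_three (m : ℕ) (P : GPt m)
    (h0 : Dfd0 P) (h1 : Dfd2 P.s0) (h2 : Dfd0 P.s0.s2)
    (h3 : Dfd2 P.s0.s2.s0) (h4 : Dfd0 P.s0.s2.s0.s2) (h5 : Dfd2 P.s0.s2.s0.s2.s0) :
    P.s0.s2.s0.s2.s0.s2 = P := by
  obtain ⟨hp0, ha0, hb0, hx0⟩ := h0
  obtain ⟨hd1, hx1⟩ := h1
  obtain ⟨hp2, ha2, hb2, hx2⟩ := h2
  obtain ⟨hd3, hx3⟩ := h3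
  obtain ⟨hp4, ha4, hb4, hx4⟩ := h4
  obtain ⟨hd5, hx5⟩ := h5
  -- e-values of intermediate points
  have E10 : P.s0.e 0 = 1 - P.e 1 := e_s0_0 P
  have E11 : P.s0.e 1 = 1 - P.e 0 := e_s0_1 P
  have E12 : P.s0.e 2 = P.e 2 := e_s0_2 P
  have E20 : P.s0.s2.e 0 = 1 - P.e 1 := by rw [e_s2_0, E10]
  have E21 : P.s0.s2.e 1 = P.e 2 := by rw [e_s2_1, E12]
  have E22 : P.s0.s2.e 2 = 1 - P.e 0 := by rw [e_s2_2, E11]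
  have E30 : P.s0.s2.s0.e 0 = 1 - P.e 2 := by rw [e_s0_0, E21]
  have E31 : P.s0.s2.s0.e 1 = P.e 1 := by rw [e_s0_1, E20]; ring
  have E32 : P.s0.s2.s0.e 2 = 1 - P.e 0 := by rw [e_s0_2, E22]
  have E40 : P.s0.s2.s0.s2.e 0 = 1 - P.e 2 := by rw [e_s2_0, E30]
  have E41 : P.s0.s2.s0.s2.e 1 = 1 - P.e 0 := by rw [e_s2_1, E32]
  have E42 : P.s0.s2.s0.s2.e 2 = P.e 1 := by rw [e_s2_2, E31]
  have E50 : P.s0.s2.s0.s2.s0.e 0 = P.e 0 := by rw [e_s0_0, E41]; ring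
  have E51 : P.s0.s2.s0.s2.s0.e 1 = P.e 2 := by rw [e_s0_1, E40]; ring
  have E52 : P.s0.s2.s0.s2.s0.e 2 = P.e 1 := by rw [e_s0_2, E42]
  have E60 : P.s0.s2.s0.s2.s0.s2.e 0 = P.e 0 := by rw [e_s2_0, E50]
  have E61 : P.s0.s2.s0.s2.s0.s2.e 1 = P.e 1 := by rw [e_s2_1, E52]
  have E62 : P.s0.s2.s0.s2.s0.s2.e 2 = P.e 2 := by rw [e_s2_2, E51]
  have EI4 : ∀ j, P.s0.s2.s0.s2.e (eIdx j) = P.e (eIdx j) := by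
    intro j; rw [e_s2_idx, e_s0_idx, e_s2_idx, e_s0_idx]
  -- Q1/Q2 values
  have FA1 : P.s0.Q1 = -(P.Q1 + P.e 2) := Q1_s0 P hp0 ha0 hb0
  have FA2 : P.s0.s2.Q1 = (P.Q1 + P.e 2) * P.s0.Q2 := by
    rw [Q1_s2 _ hd1, FA1]; ring
  have FC2 : P.s0.s2.Q2 = 1 / P.s0.Q2 := Q2_s2 _ hd1
  have hB2eq : P.s0.s2.Q1 + P.s0.s2.e 2
      = (P.Q1 + P.e 2) * P.s0.Q2 + 1 - P.e 0 := by rw [FA2, E22]; ring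
  have hB2ne : (P.Q1 + P.e 2) * P.s0.Q2 + 1 - P.e 0 ≠ 0 := hB2eq ▸ hb2
  have hbd : (P.Q1 + P.e 2) * P.s0.Q2 ≠ 0 := FA2 ▸ ha2
  have FC3 : P.s0.s2.s0.Q2
      = (P.Q1 * P.Q2 - P.e 1) / ((P.Q1 + P.e 2) * P.s0.Q2 + 1 - P.e 0) :=
    Q2_s0s2s0 P hp0 ha0 hb0 hd1 ha2 hb2
  have hacne : P.Q1 * P.Q2 - P.e 1 ≠ 0 := by
    intro h; apply hd3; rw [FC3, h, zero_div]
  have FA3 : P.s0.s2.s0.Q1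
      = -((P.Q1 + P.e 2) * P.s0.Q2 + 1 - P.e 0) := by
    rw [Q1_s0 _ hp2 ha2 hb2, hB2eq]
  have FA4 : P.s0.s2.s0.s2.Q1 = P.Q1 * P.Q2 - P.e 1 := by
    rw [Q1_s2 _ hd3, FA3, FC3]
    field_simp
  have FC4 : P.s0.s2.s0.s2.Q2
      = ((P.Q1 + P.e 2) * P.s0.Q2 + 1 - P.e 0) / (P.Q1 * P.Q2 - P.e 1) := by
    rw [Q2_s2 _ hd3, FC3, one_div_div]
  have hac : P.Q1 * P.Q2 ≠ 0 := by
    have h := hb4; rw [FA4, E42] at h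
    intro hh; apply h; rw [← hh]; ring
  have hc0 : P.Q2 ≠ 0 := fun h => hac (by rw [h, mul_zero])
  have hacmul : (P.Q1 * P.Q2 - P.e 1) * (P.Q1 * P.Q2 - P.e 1 + P.e 1) ≠ 0 :=
    mul_ne_zero hacne (by intro h; apply hac; linear_combination h)
  have FA5 : P.s0.s2.s0.s2.s0.Q1 = -(P.Q1 * P.Q2) := by
    rw [Q1_s0 _ hp4 ha4 hb4, FA4, E42]; ring
  have FC5 : P.s0.s2.s0.s2.s0.Q2 = 1 / P.Q2 := by
    have hnum : P.s0.s2.Q1 * P.s0.s2.Q2 - P.s0.s2.e 1 = P.Q1 := by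
      rw [FA2, FC2, E21]
      field_simp
      ring
    have hden : (P.s0.s2.Q1 + P.s0.s2.e 2) * P.s0.s2.s0.Q2 + 1 - P.s0.s2.e 0
        = P.Q1 * P.Q2 := by
      rw [hB2eq, FC3, E20]
      rw [mul_div_cancel₀ _ hB2ne]
      ring
    rw [Q2_s0s2s0 (P.s0.s2) hp2 ha2 hb2 hd3 ha4 hb4, hnum, hden,
      div_eq_div_iff hac hc0]
    ring
  -- component-wise
  apply ext'
  · funext j
    by_cases hj0 : j = 0
    · rw [hj0, E60]
    by_cases hj1 : j = 1
    · rw [hj1, E61]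
    by_cases hj2 : j = 2
    · rw [hj2, E62]
    rw [e_s2_other _ hj1 hj2, e_s0_other _ hj0 hj1, e_s2_other _ hj1 hj2,
      e_s0_other _ hj0 hj1, e_s2_other _ hj1 hj2, e_s0_other _ hj0 hj1]
  · funext j
    have hpj := hp0 j
    have hp2' : P.s0.s2.p j
        = (P.Q1 + P.e 2) * P.s0.Q2 * (P.p j - P.Q1) / P.p j := by
      show (P.s0.p j - P.s0.Q1) * P.s0.Q2 = _
      rw [s0_p_sub P hp0 ha0 hb0 j]
      field_simp
    have hpa : P.p j - P.Q1 ≠ 0 := by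
      intro h; apply hp2 j; rw [hp2', h, mul_zero, zero_div]
    have hp4' : P.s0.s2.s0.s2.p j
        = -(P.Q1 * (P.Q1 * P.Q2 - P.e 1)) / (P.p j - P.Q1) := by
      show (P.s0.s2.s0.p j - P.s0.s2.s0.Q1) * P.s0.s2.s0.Q2 = _
      have hp3' : P.s0.s2.s0.p j
          = -((P.Q1 + P.e 2) * P.s0.Q2 + 1 - P.e 0) * P.p j
            / (P.p j - P.Q1) := by
        show -(P.s0.s2.Q1 * (P.s0.s2.Q1 + P.s0.s2.e 2)) / P.s0.s2.p j = _
        rw [hB2eq, FA2, hp2', div_div_eq_mul_div,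
          div_eq_div_iff (mul_ne_zero hbd hpa) hpa]
        ring
      rw [hp3', FA3, FC3]
      field_simp
      ring
    have hstep2 : P.s0.s2.q j * P.s0.s2.p j
        = P.s0.q j * (P.s0.p j - P.s0.Q1) := by
      show P.s0.q j / P.s0.Q2 * ((P.s0.p j - P.s0.Q1) * P.s0.Q2) = _
      field_simp
    have hq2p2 : P.s0.s2.q j * P.s0.s2.p j
        = (P.q j * P.p j - P.e (eIdx j)) * (P.p j - P.Q1) / P.Q1 := by
      rw [hstep2, s0_qp_sub P hp0 ha0 hb0 j]
    have hq3' : P.s0.s2.s0.q j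
        = ((P.q j * P.p j - P.e (eIdx j)) * (P.p j - P.Q1) / P.Q1
            - P.e (eIdx j)) * (P.p j - P.Q1)
          / (P.p j * ((P.Q1 + P.e 2) * P.s0.Q2 + 1 - P.e 0)) := by
      show P.s0.s2.p j * (P.s0.s2.q j * P.s0.s2.p j - P.s0.s2.e (eIdx j))
        / (P.s0.s2.Q1 * (P.s0.s2.Q1 + P.s0.s2.e 2)) = _
      rw [e_s2_idx, e_s0_idx, hq2p2, hB2eq, FA2, hp2']
      generalize (P.q j * P.p j - P.e (eIdx j)) * (P.p j - P.Q1) / P.Q1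
        - P.e (eIdx j) = W
      field_simp
    have hq4' : P.s0.s2.s0.s2.q j
        = ((P.q j * P.p j - P.e (eIdx j)) * (P.p j - P.Q1) / P.Q1
            - P.e (eIdx j)) * (P.p j - P.Q1)
          / (P.p j * (P.Q1 * P.Q2 - P.e 1)) := by
      show P.s0.s2.s0.q j / P.s0.s2.s0.Q2 = _
      rw [hq3', FC3]
      generalize (P.q j * P.p j - P.e (eIdx j)) * (P.p j - P.Q1) / P.Q1
        - P.e (eIdx j) = W
      field_simp
    have hq4p4 : P.s0.s2.s0.s2.q j * P.s0.s2.s0.s2.p j - P.e (eIdx j)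
        = P.q j * (P.Q1 - P.p j) := by
      rw [hq4', hp4']
      field_simp
      ring
    have hq5 : P.s0.s2.s0.s2.s0.q j = P.q j / P.Q2 := by
      show P.s0.s2.s0.s2.p j * (P.s0.s2.s0.s2.q j * P.s0.s2.s0.s2.p j
          - P.s0.s2.s0.s2.e (eIdx j))
        / (P.s0.s2.s0.s2.Q1 * (P.s0.s2.s0.s2.Q1 + P.s0.s2.s0.s2.e 2)) = _
      rw [EI4, hq4p4, hp4', FA4, E42, div_mul_eq_mul_div, div_div,
        div_eq_div_iff (mul_ne_zero hpa hacmul) hc0]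
      ring
    show P.s0.s2.s0.s2.s0.q j / P.s0.s2.s0.s2.s0.Q2 = P.q j
    rw [FC5, hq5]
    field_simp
  · funext j
    have hpj := hp0 j
    have hp2' : P.s0.s2.p j
        = (P.Q1 + P.e 2) * P.s0.Q2 * (P.p j - P.Q1) / P.p j := by
      show (P.s0.p j - P.s0.Q1) * P.s0.Q2 = _
      rw [s0_p_sub P hp0 ha0 hb0 j]
      field_simp
    have hpa : P.p j - P.Q1 ≠ 0 := by
      intro h; apply hp2 j; rw [hp2', h, mul_zero, zero_div]
    have hp4' : P.s0.s2.s0.s2.p j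
        = -(P.Q1 * (P.Q1 * P.Q2 - P.e 1)) / (P.p j - P.Q1) := by
      show (P.s0.s2.s0.p j - P.s0.s2.s0.Q1) * P.s0.s2.s0.Q2 = _
      have hp3' : P.s0.s2.s0.p j
          = -((P.Q1 + P.e 2) * P.s0.Q2 + 1 - P.e 0) * P.p j
            / (P.p j - P.Q1) := by
        show -(P.s0.s2.Q1 * (P.s0.s2.Q1 + P.s0.s2.e 2)) / P.s0.s2.p j = _
        rw [hB2eq, FA2, hp2', div_div_eq_mul_div,
          div_eq_div_iff (mul_ne_zero hbd hpa) hpa]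
        ring
      rw [hp3', FA3, FC3]
      field_simp
      ring
    have hp5' : P.s0.s2.s0.s2.s0.p j = P.Q2 * (P.p j - P.Q1) := by
      show -(P.s0.s2.s0.s2.Q1 * (P.s0.s2.s0.s2.Q1 + P.s0.s2.s0.s2.e 2))
        / P.s0.s2.s0.s2.p j = _
      rw [FA4, E42, hp4', div_div_eq_mul_div,
        div_eq_iff (neg_ne_zero.mpr (mul_ne_zero ha0 hacne))]
      ring
    show (P.s0.s2.s0.s2.s0.p j - P.s0.s2.s0.s2.s0.Q1) * P.s0.s2.s0.s2.s0.Q2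
      = P.p j
    rw [hp5', FA5, FC5]
    field_simp
    ring
  · funext i
    have hxi := hx0 i
    have hx1' : P.x i ≠ 1 := by
      intro h
      apply hx1 i
      show 1 / P.x i = 1
      rw [h]; norm_num
    have hxs : P.x i - 1 ≠ 0 := sub_ne_zero.mpr hx1'
    have hxs' : (1 : ℂ) - P.x i ≠ 0 := fun h => hx1' (by linear_combination -h)
    have X1 : P.s0.x i = 1 / P.x i := rfl
    have X2 : P.s0.s2.x i = 1 / (1 - P.x i) := by
      show P.s0.x i / (P.s0.x i - 1) = _
      rw [X1, div_sub_one hxi, div_div_eq_mul_div, div_mul_cancel₀ _ hxi]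
    have X3 : P.s0.s2.s0.x i = 1 - P.x i := by
      show 1 / P.s0.s2.x i = _
      rw [X2, one_div_one_div]
    have X4 : P.s0.s2.s0.s2.x i = (P.x i - 1) / P.x i := by
      show P.s0.s2.s0.x i / (P.s0.s2.s0.x i - 1) = _
      rw [X3, show (1 : ℂ) - P.x i - 1 = -P.x i from by ring,
        div_eq_div_iff (neg_ne_zero.mpr hxi) hxi]
      ring
    have X5 : P.s0.s2.s0.s2.s0.x i = P.x i / (P.x i - 1) := by
      show 1 / P.s0.s2.s0.s2.x i = _
      rw [X4, one_div_div]
    show P.s0.s2.s0.s2.s0.x i / (P.s0.s2.s0.s2.s0.x i - 1) = P.x i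
    rw [X5, div_sub_one hxs, show P.x i - (P.x i - 1) = 1 from by ring,
      div_div_eq_mul_div, div_one, div_mul_cancel₀ _ hxs]
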